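/- Let x, y ∈ B² ⊂ ℂ with x ≠ 0, y ≠ 0 and |x| = |y|, and let ω = ∠(x, 0, y) be the angle at the origin between x and y. If cos(ω/2) < |x| then s_{B²}(x,y) = |x|; if cos(ω/2) ≥ |x| then s_{B²}(x,y) = |x|·sin(ω/2) / √(1 + |x|² − 2|x|·cos(ω/2)). -/

import Mathlib

open Metric Set Real

/-- The triangular ratio metric of `G`. -/
noncomputable def sMet {E : Type*} [MetricSpace E] (G : Set E) (x y : E) : ℝ :=
  sSup ((fun z => dist x y / (dist x z + dist z y)) '' frontier G)

/-- The Cassinian metric of `G`. -/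
noncomputable def cMet {E : Type*} [MetricSpace E] (G : Set E) (x y : E) : ℝ :=
  sSup ((fun z => dist x y / (dist x z * dist z y)) '' frontier G)

/-- The distance ratio metric of `G`. -/
noncomputable def jMet {E : Type*} [MetricSpace E] (G : Set E) (x y : E) : ℝ :=
  Real.log (1 + dist x y / min (infDist x (frontier G)) (infDist y (frontier G)))

private lemma eq_of_sq_eq' {a b : ℝ} (ha : 0 ≤ a) (hb : 0 ≤ b) (h : a^2 = b^2) : a = b := by
  have h2 : |a| = |b| := by rw [← Real.sqrt_sq_eq_abs, ← Real.sqrt_sq_eq_abs, h]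
  rwa [abs_of_nonneg ha, abs_of_nonneg hb] at h2

private lemma csSup_image_eq' {g : ℂ → ℝ} {S : Set ℂ} {z₀ : ℂ} (hz₀ : z₀ ∈ S) {c : ℝ}
    (hc : g z₀ = c) (hub : ∀ z ∈ S, g z ≤ c) : sSup (g '' S) = c := by
  apply le_antisymm
  · exact csSup_le ⟨c, ⟨z₀, hz₀, hc⟩⟩ (by rintro w ⟨z, hz, rfl⟩; exact hub z hz)
  · exact le_csSup ⟨c, by rintro w ⟨z, hz, rfl⟩; exact hub z hz⟩ ⟨z₀, hz₀, hc⟩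

private lemma two_sqrt_le {A a b : ℝ} (hA : 0 ≤ A) (ha : 0 ≤ a) (hb : 0 ≤ b)
    (h : 4*A ≤ (a+b)^2) : 2*Real.sqrt A ≤ a+b := by
  have h1 : (2*Real.sqrt A)^2 = 4*A := by rw [mul_pow, Real.sq_sqrt hA]; ring
  nlinarith [Real.sqrt_nonneg A, h1, h, ha, hb]

set_option maxHeartbeats 1000000 in
private lemma key_ineq1 (r c s σ δ a b : ℝ)
    (hr0 : 0 < r) (hr1 : r < 1) (hc0 : 0 ≤ c) (hs0 : 0 ≤ s)
    (hcs : s^2 + c^2 = 1) (ha0 : 0 ≤ a) (hb0 : 0 ≤ b)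
    (ha2 : a^2 = 1 + r^2 - σ - δ) (hb2 : b^2 = 1 + r^2 - σ + δ)
    (hPar : r^2*(s^2*σ^2 + c^2*δ^2) = 4*c^2*s^2*r^4)
    (hσ : σ^2 ≤ 4*c^2*r^2) (hδ : δ^2 ≤ 4*s^2*r^2) :
    2*s ≤ a + b := by
  have hgd : 0 ≤ 4*s^2*(1+r^2-σ-s^2) - δ^2 := by
    rcases eq_or_lt_of_le hc0 with hc|hc
    · have hc' : c = 0 := hc.symm
      subst hc'
      have hs1 : s^2 = 1 := by nlinarith [hcs]
      have hσ2 : σ^2 = 0 := le_antisymm (by nlinarith [hσ]) (sq_nonneg σ)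
      have hσ0 : σ = 0 := by
        exact pow_eq_zero_iff two_ne_zero |>.mp hσ2
      nlinarith [hδ, hs1, hσ0]
    · have h1 : r^2*c^2*(4*s^2*(1+r^2-σ-s^2) - δ^2) = r^2*s^2*(2*c^2-σ)^2 := by
        linear_combination (-1)*hPar + (-4*r^2*s^2*c^2)*hcs
      have h2 : 0 ≤ r^2*c^2*(4*s^2*(1+r^2-σ-s^2) - δ^2) := by
        rw [h1]; positivity
      have hpos : 0 < r^2*c^2 := by positivity
      nlinarith [h2, hpos]
  have h3 : (a*b)^2 = (2*s^2 - (1+r^2-σ))^2 + (4*s^2*(1+r^2-σ-s^2) - δ^2) := by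
    linear_combination (b^2)*ha2 + (1+r^2-σ-δ)*hb2
  have hK : 2*s^2 - (1+r^2-σ) ≤ a*b := by
    nlinarith [h3, hgd, mul_nonneg ha0 hb0]
  nlinarith [hK, ha2, hb2, ha0, hb0, hs0, sq_nonneg (a+b-2*s)]

set_option maxHeartbeats 1000000 in
private lemma key_ineq2 (r c s σ δ a b : ℝ)
    (hr0 : 0 < r) (hr1 : r < 1) (hc0 : 0 ≤ c) (hs0 : 0 ≤ s)
    (hcs : s^2 + c^2 = 1) (ha0 : 0 ≤ a) (hb0 : 0 ≤ b)
    (ha2 : a^2 = 1 + r^2 - σ - δ) (hb2 : b^2 = 1 + r^2 - σ + δ)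
    (hPar : r^2*(s^2*σ^2 + c^2*δ^2) = 4*c^2*s^2*r^4)
    (hσ : σ^2 ≤ 4*c^2*r^2) (hδ : δ^2 ≤ 4*s^2*r^2)
    (hrc : r ≤ c) :
    4*(1+r^2-2*r*c) ≤ (a+b)^2 := by
  have hcpos : 0 < c := lt_of_lt_of_le hr0 hrc
  have hc1 : c ≤ 1 := by nlinarith [hcs, sq_nonneg s]
  have hσle : σ ≤ 2*r*c := by nlinarith [hσ, mul_nonneg hr0.le hc0]
  have hfac : 0 ≤ 4*c^2*(1+r^2-2*r*c) - 2*r*c*s^2 - s^2*σ := by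
    have htri : 0 ≤ c*(c-r)*(1-r*c) :=
      mul_nonneg (mul_nonneg hc0 (sub_nonneg.2 hrc)) (by nlinarith)
    nlinarith [mul_nonneg (sq_nonneg s) (sub_nonneg.2 hσle), htri]
  have h1 : r^2*c^2*(4*(2*r*c-σ)*(1+r^2-2*r*c) - δ^2)
      = r^2*((2*r*c-σ)*(4*c^2*(1+r^2-2*r*c)-2*r*c*s^2-s^2*σ)) := by
    linear_combination (-1)*hPar
  have h2 : 0 ≤ r^2*c^2*(4*(2*r*c-σ)*(1+r^2-2*r*c) - δ^2) := by
    rw [h1]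
    exact mul_nonneg (sq_nonneg r) (mul_nonneg (sub_nonneg.2 hσle) hfac)
  have hpos : 0 < r^2*c^2 := by positivity
  have hD : 0 ≤ 4*(2*r*c-σ)*(1+r^2-2*r*c) - δ^2 := by nlinarith [h2, hpos]
  have h3 : (a*b)^2 = (1+r^2-4*r*c+σ)^2 + (4*(2*r*c-σ)*(1+r^2-2*r*c) - δ^2) := by
    linear_combination (b^2)*ha2 + (1+r^2-σ-δ)*hb2
  have hK : 1+r^2-4*r*c+σ ≤ a*b := by
    nlinarith [h3, hD, mul_nonneg ha0 hb0]
  nlinarith [hK, ha2, hb2]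

set_option maxHeartbeats 2000000 in
/-- for `x, y ∈ B²` nonzero with `|x| = |y|` and `ω = ∠(x,0,y)`:
if `cos(ω/2) < |x|` then `s_{B²}(x,y) = |x|`; if `cos(ω/2) ≥ |x|` then
`s_{B²}(x,y) = |x|·sin(ω/2)/√(1 + |x|² − 2|x|·cos(ω/2))`. -/
theorem sMet_formula_same_norm (x y : ℂ)
    (hx : x ∈ Metric.ball (0 : ℂ) 1) (hy : y ∈ Metric.ball (0 : ℂ) 1)
    (hx0 : x ≠ 0) (hy0 : y ≠ 0) (hxy : ‖x‖ = ‖y‖)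
    (ω : ℝ) (hω : ω = EuclideanGeometry.angle x 0 y) :
    (Real.cos (ω / 2) < ‖x‖ → sMet (Metric.ball (0 : ℂ) 1) x y = ‖x‖) ∧
    (‖x‖ ≤ Real.cos (ω / 2) →
      sMet (Metric.ball (0 : ℂ) 1) x y =
        ‖x‖ * Real.sin (ω / 2) /
          Real.sqrt (1 + ‖x‖ ^ 2 - 2 * ‖x‖ * Real.cos (ω / 2))) := by
  have hfr : frontier (Metric.ball (0:ℂ) 1) = Metric.sphere 0 1 := frontier_ball 0 one_ne_zero
  have hnsq : ∀ w : ℂ, ‖w‖^2 = w.re^2 + w.im^2 := fun w => by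
    rw [Complex.sq_norm, Complex.normSq_apply]; ring
  have hr0 : 0 < ‖x‖ := norm_pos_iff.mpr hx0
  have hr1 : ‖x‖ < 1 := mem_ball_zero_iff.mp hx
  have h1mr : 0 ≤ 1 - ‖x‖^2 := by nlinarith [hr0, hr1]
  have hx2 : x.re^2 + x.im^2 = ‖x‖^2 := (hnsq x).symm
  have hy2 : y.re^2 + y.im^2 = ‖x‖^2 := by rw [hxy]; exact (hnsq y).symm
  have hω0 : 0 ≤ ω := hω ▸ EuclideanGeometry.angle_nonneg x 0 y
  have hωπ : ω ≤ π := hω ▸ EuclideanGeometry.angle_le_pi x 0 y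
  have hc0 : 0 ≤ Real.cos (ω/2) :=
    Real.cos_nonneg_of_mem_Icc ⟨by linarith [Real.pi_pos], by linarith⟩
  have hs0 : 0 ≤ Real.sin (ω/2) :=
    Real.sin_nonneg_of_nonneg_of_le_pi (by linarith) (by linarith [Real.pi_pos])
  have hcs : Real.sin (ω/2)^2 + Real.cos (ω/2)^2 = 1 := Real.sin_sq_add_cos_sq _
  have hip : x.re*y.re + x.im*y.im = (2*Real.cos (ω/2)^2 - 1)*‖x‖^2 := by
    have h := InnerProductGeometry.cos_angle_mul_norm_mul_norm x y
    have h2 : Real.cos ω * (‖x‖ * ‖y‖) = x.re*y.re + x.im*y.im := by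
      rw [hω]
      simp only [EuclideanGeometry.angle, vsub_eq_sub, sub_zero]
      rw [h, Complex.inner, Complex.mul_re]
      simp [Complex.conj_re, Complex.conj_im]; ring
    have h3 : Real.cos ω = 2*Real.cos (ω/2)^2 - 1 := by
      have h4 := Real.cos_sq (ω/2)
      have h5 : 2*(ω/2) = ω := by ring
      rw [h5] at h4
      linarith [h4]
    rw [← hxy] at h2
    rw [← h2, h3]; ring
  have hdxy : dist x y = 2*(‖x‖*Real.sin (ω/2)) := by
    apply eq_of_sq_eq' dist_nonneg
      (mul_nonneg zero_le_two (mul_nonneg (norm_nonneg x) hs0))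
    rw [dist_eq_norm, hnsq]
    simp only [Complex.sub_re, Complex.sub_im]
    linear_combination hx2 + hy2 - 2*hip - 4*‖x‖^2*hcs
  -- per-z facts
  have hzfacts : ∀ z ∈ Metric.sphere (0:ℂ) 1,
      0 < dist x z ∧ 0 < dist z y ∧
      dist x z^2 = 1 + ‖x‖^2 - ((x.re*z.re+x.im*z.im)+(y.re*z.re+y.im*z.im))
        - ((x.re*z.re+x.im*z.im)-(y.re*z.re+y.im*z.im)) ∧
      dist z y^2 = 1 + ‖x‖^2 - ((x.re*z.re+x.im*z.im)+(y.re*z.re+y.im*z.im))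
        + ((x.re*z.re+x.im*z.im)-(y.re*z.re+y.im*z.im)) ∧
      ‖x‖^2*(Real.sin (ω/2)^2*((x.re*z.re+x.im*z.im)+(y.re*z.re+y.im*z.im))^2
        + Real.cos (ω/2)^2*((x.re*z.re+x.im*z.im)-(y.re*z.re+y.im*z.im))^2)
        = 4*Real.cos (ω/2)^2*Real.sin (ω/2)^2*‖x‖^4 ∧
      ((x.re*z.re+x.im*z.im)+(y.re*z.re+y.im*z.im))^2 ≤ 4*Real.cos (ω/2)^2*‖x‖^2 ∧
      ((x.re*z.re+x.im*z.im)-(y.re*z.re+y.im*z.im))^2 ≤ 4*Real.sin (ω/2)^2*‖x‖^2 := by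
    intro z hz
    have hz1 : dist z 0 = 1 := mem_sphere.mp hz
    have hzn : ‖z‖ = 1 := by rwa [dist_zero_right] at hz1
    have hz2 : z.re^2 + z.im^2 = 1 := by
      have h := hnsq z; rw [hzn] at h; rw [← h]; norm_num
    have hax : 0 < dist x z := by
      have ht := dist_triangle z x 0
      simp only [dist_zero_right] at ht
      rw [hzn, dist_comm z x] at ht
      linarith
    have hby : 0 < dist z y := by
      have ht := dist_triangle z y 0
      simp only [dist_zero_right] at ht
      rw [hzn, ← hxy] at ht
      linarith
    have ha2 : dist x z^2 = 1 + ‖x‖^2 - 2*(x.re*z.re+x.im*z.im) := by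
      rw [dist_eq_norm, hnsq]
      simp only [Complex.sub_re, Complex.sub_im]
      linear_combination hx2 + hz2
    have hb2 : dist z y^2 = 1 + ‖x‖^2 - 2*(y.re*z.re+y.im*z.im) := by
      rw [dist_eq_norm, hnsq]
      simp only [Complex.sub_re, Complex.sub_im]
      linear_combination hy2 + hz2
    have hGram : ‖x‖^2*(x.re*z.re+x.im*z.im)^2 + ‖x‖^2*(y.re*z.re+y.im*z.im)^2
        - 2*(x.re*y.re+x.im*y.im)*((x.re*z.re+x.im*z.im)*(y.re*z.re+y.im*z.im))
        = ‖x‖^4 - (x.re*y.re+x.im*y.im)^2 := by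
      linear_combination ((y.re^2+y.im^2)*(z.re^2+z.im^2) - (y.re*z.re+y.im*z.im)^2) * hx2
        + (‖x‖^2*(z.re^2+z.im^2) - (x.re*z.re+x.im*z.im)^2) * hy2
        + (‖x‖^4 - (x.re*y.re+x.im*y.im)^2) * hz2
    refine ⟨hax, hby, by linear_combination ha2, by linear_combination hb2, ?_, ?_, ?_⟩
    · linear_combination hGram
        + (2*(x.re*z.re+x.im*z.im)*(y.re*z.re+y.im*z.im)
            - 2*(2*Real.cos (ω/2)^2-1)*‖x‖^2
            - ((x.re*y.re+x.im*y.im) - (2*Real.cos (ω/2)^2-1)*‖x‖^2))*hip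
        + (‖x‖^2*((x.re*z.re+x.im*z.im)+(y.re*z.re+y.im*z.im))^2
            - 4*Real.cos (ω/2)^2*‖x‖^4)*hcs
    · have hA : (x.re+y.re)^2+(x.im+y.im)^2 = 4*Real.cos (ω/2)^2*‖x‖^2 := by
        linear_combination hx2 + hy2 + 2*hip
      nlinarith [sq_nonneg ((x.re+y.re)*z.im - (x.im+y.im)*z.re), hz2, hA]
    · have hB : (x.re-y.re)^2+(x.im-y.im)^2 = 4*Real.sin (ω/2)^2*‖x‖^2 := by
        linear_combination hx2 + hy2 - 2*hip - 4*‖x‖^2*hcs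
      nlinarith [sq_nonneg ((x.re-y.re)*z.im - (x.im-y.im)*z.re), hz2, hB]
  constructor
  · -- case cos(ω/2) < r
    intro h1
    have hs1pos : 0 < Real.sin (ω/2) := by nlinarith [hcs, hc0, hs0]
    have ht2' : 0 ≤ ‖x‖^2 - Real.cos (ω/2)^2 := by nlinarith [hc0]
    have ht0 : 0 ≤ Real.sqrt (‖x‖^2 - Real.cos (ω/2)^2) := Real.sqrt_nonneg _
    have ht2 : Real.sqrt (‖x‖^2 - Real.cos (ω/2)^2)^2 = ‖x‖^2 - Real.cos (ω/2)^2 :=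
      Real.sq_sqrt ht2'
    set t := Real.sqrt (‖x‖^2 - Real.cos (ω/2)^2) with htdef
    have hd0 : (2*‖x‖^2*Real.sin (ω/2)) ≠ 0 :=
      ne_of_gt (mul_pos (by positivity) hs1pos)
    set u₁ := ((x.re+y.re)*Real.sin (ω/2) + t*(x.re-y.re))/(2*‖x‖^2*Real.sin (ω/2)) with hu₁
    set u₂ := ((x.im+y.im)*Real.sin (ω/2) + t*(x.im-y.im))/(2*‖x‖^2*Real.sin (ω/2)) with hu₂
    set zs : ℂ := ⟨u₁, u₂⟩ with hzs
    have hzsre : zs.re = u₁ := rfl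
    have hzsim : zs.im = u₂ := rfl
    have hnum : ((x.re+y.re)*Real.sin (ω/2) + t*(x.re-y.re))^2
        + ((x.im+y.im)*Real.sin (ω/2) + t*(x.im-y.im))^2 = (2*‖x‖^2*Real.sin (ω/2))^2 := by
      linear_combination (Real.sin (ω/2)^2)*hx2 + (Real.sin (ω/2)^2)*hy2
        + (2*Real.sin (ω/2)^2)*hip + (t^2)*hx2 + (t^2)*hy2 - (2*t^2)*hip
        - (4*t^2*‖x‖^2)*hcs + (2*t*Real.sin (ω/2))*hx2 - (2*t*Real.sin (ω/2))*hy2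
        + (4*Real.sin (ω/2)^2*‖x‖^2)*ht2
    have hu1 : u₁^2 + u₂^2 = 1 := by
      rw [hu₁, hu₂, div_pow, div_pow, ← add_div, hnum]
      exact div_self (pow_ne_zero 2 hd0)
    have hmem : zs ∈ Metric.sphere (0:ℂ) 1 := by
      rw [mem_sphere, dist_zero_right]
      apply eq_of_sq_eq' (norm_nonneg _) zero_le_one
      rw [hnsq, hzsre, hzsim, hu1]; norm_num
    have hxnum : x.re*((x.re+y.re)*Real.sin (ω/2) + t*(x.re-y.re))
        + x.im*((x.im+y.im)*Real.sin (ω/2) + t*(x.im-y.im))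
        = (Real.cos (ω/2)^2 + t*Real.sin (ω/2))*(2*‖x‖^2*Real.sin (ω/2)) := by
      linear_combination (Real.sin (ω/2))*hx2 + (Real.sin (ω/2))*hip + t*hx2 - t*hip
        - (2*t*‖x‖^2)*hcs
    have hynum : y.re*((x.re+y.re)*Real.sin (ω/2) + t*(x.re-y.re))
        + y.im*((x.im+y.im)*Real.sin (ω/2) + t*(x.im-y.im))
        = (Real.cos (ω/2)^2 - t*Real.sin (ω/2))*(2*‖x‖^2*Real.sin (ω/2)) := by
      linear_combination (Real.sin (ω/2))*hy2 + (Real.sin (ω/2))*hip - t*hy2 + t*hip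
        + (2*t*‖x‖^2)*hcs
    have hxu : x.re*u₁ + x.im*u₂ = Real.cos (ω/2)^2 + t*Real.sin (ω/2) := by
      have e : x.re*u₁ + x.im*u₂ = (x.re*((x.re+y.re)*Real.sin (ω/2) + t*(x.re-y.re))
          + x.im*((x.im+y.im)*Real.sin (ω/2) + t*(x.im-y.im)))/(2*‖x‖^2*Real.sin (ω/2)) := by
        rw [hu₁, hu₂]; ring
      rw [e, hxnum, mul_div_cancel_right₀ _ hd0]
    have hyu : y.re*u₁ + y.im*u₂ = Real.cos (ω/2)^2 - t*Real.sin (ω/2) := by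
      have e : y.re*u₁ + y.im*u₂ = (y.re*((x.re+y.re)*Real.sin (ω/2) + t*(x.re-y.re))
          + y.im*((x.im+y.im)*Real.sin (ω/2) + t*(x.im-y.im)))/(2*‖x‖^2*Real.sin (ω/2)) := by
        rw [hu₁, hu₂]; ring
      rw [e, hynum, mul_div_cancel_right₀ _ hd0]
    have ha2v : dist x zs^2 = 1 + ‖x‖^2 - 2*(Real.cos (ω/2)^2 + t*Real.sin (ω/2)) := by
      rw [dist_eq_norm, hnsq]
      simp only [Complex.sub_re, Complex.sub_im, hzsre, hzsim]
      linear_combination hx2 + hu1 - 2*hxu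
    have hb2v : dist zs y^2 = 1 + ‖x‖^2 - 2*(Real.cos (ω/2)^2 - t*Real.sin (ω/2)) := by
      rw [dist_eq_norm, hnsq]
      simp only [Complex.sub_re, Complex.sub_im, hzsre, hzsim]
      linear_combination hy2 + hu1 - 2*hyu
    have hab2 : (dist x zs * dist zs y)^2 = (1-‖x‖^2)^2 := by
      rw [mul_pow, ha2v, hb2v]
      linear_combination (-4*Real.sin (ω/2)^2)*ht2 + (-4*(‖x‖^2-Real.cos (ω/2)^2))*hcs
    have habv : dist x zs * dist zs y = 1-‖x‖^2 :=
      eq_of_sq_eq' (mul_nonneg dist_nonneg dist_nonneg) h1mr hab2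
    have hsumv : dist x zs + dist zs y = 2*Real.sin (ω/2) := by
      apply eq_of_sq_eq' (add_nonneg dist_nonneg dist_nonneg)
        (mul_nonneg zero_le_two hs0)
      have hexp : (dist x zs + dist zs y)^2
          = dist x zs^2 + dist zs y^2 + 2*(dist x zs * dist zs y) := by ring
      rw [hexp, ha2v, hb2v, habv]
      linear_combination (-4)*hcs
    have hval : dist x y / (dist x zs + dist zs y) = ‖x‖ := by
      rw [hdxy, hsumv, div_eq_iff (ne_of_gt (mul_pos two_pos hs1pos))]
      ring
    unfold sMet
    rw [hfr]
    apply csSup_image_eq' hmem hval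
    intro z hz
    obtain ⟨hax, hby, ha2, hb2, hPar, hσ, hδ⟩ := hzfacts z hz
    rw [div_le_iff₀ (add_pos hax hby)]
    have hkey := key_ineq1 ‖x‖ (Real.cos (ω/2)) (Real.sin (ω/2))
      ((x.re*z.re+x.im*z.im)+(y.re*z.re+y.im*z.im))
      ((x.re*z.re+x.im*z.im)-(y.re*z.re+y.im*z.im))
      (dist x z) (dist z y) hr0 hr1 hc0 hs0 hcs hax.le hby.le ha2 hb2 hPar hσ hδ
    rw [hdxy]
    calc 2*(‖x‖*Real.sin (ω/2)) = ‖x‖*(2*Real.sin (ω/2)) := by ring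
      _ ≤ ‖x‖*(dist x z + dist z y) := mul_le_mul_of_nonneg_left hkey (norm_nonneg x)
  · -- case r ≤ cos(ω/2)
    intro h2
    have hcpos : 0 < Real.cos (ω/2) := lt_of_lt_of_le hr0 h2
    have hc1 : Real.cos (ω/2) ≤ 1 := Real.cos_le_one _
    have hA0 : 0 < 1 + ‖x‖^2 - 2*‖x‖*Real.cos (ω/2) := by nlinarith [sq_nonneg (1-‖x‖)]
    have hsA : 0 < Real.sqrt (1 + ‖x‖^2 - 2*‖x‖*Real.cos (ω/2)) := Real.sqrt_pos.mpr hA0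
    have hsA2 : Real.sqrt (1 + ‖x‖^2 - 2*‖x‖*Real.cos (ω/2))^2
        = 1 + ‖x‖^2 - 2*‖x‖*Real.cos (ω/2) := Real.sq_sqrt hA0.le
    have hd0 : (2*‖x‖*Real.cos (ω/2)) ≠ 0 := by positivity
    set u₁ := (x.re+y.re)/(2*‖x‖*Real.cos (ω/2)) with hu₁
    set u₂ := (x.im+y.im)/(2*‖x‖*Real.cos (ω/2)) with hu₂
    set zs : ℂ := ⟨u₁, u₂⟩ with hzs
    have hzsre : zs.re = u₁ := rfl
    have hzsim : zs.im = u₂ := rfl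
    have hnum : (x.re+y.re)^2 + (x.im+y.im)^2 = (2*‖x‖*Real.cos (ω/2))^2 := by
      linear_combination hx2 + hy2 + 2*hip
    have hu1 : u₁^2 + u₂^2 = 1 := by
      rw [hu₁, hu₂, div_pow, div_pow, ← add_div, hnum]
      exact div_self (pow_ne_zero 2 hd0)
    have hmem : zs ∈ Metric.sphere (0:ℂ) 1 := by
      rw [mem_sphere, dist_zero_right]
      apply eq_of_sq_eq' (norm_nonneg _) zero_le_one
      rw [hnsq, hzsre, hzsim, hu1]; norm_num
    have hxnum : x.re*(x.re+y.re) + x.im*(x.im+y.im)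
        = (‖x‖*Real.cos (ω/2))*(2*‖x‖*Real.cos (ω/2)) := by
      linear_combination hx2 + hip
    have hynum : y.re*(x.re+y.re) + y.im*(x.im+y.im)
        = (‖x‖*Real.cos (ω/2))*(2*‖x‖*Real.cos (ω/2)) := by
      linear_combination hy2 + hip
    have hxu : x.re*u₁ + x.im*u₂ = ‖x‖*Real.cos (ω/2) := by
      have e : x.re*u₁ + x.im*u₂
          = (x.re*(x.re+y.re) + x.im*(x.im+y.im))/(2*‖x‖*Real.cos (ω/2)) := by
        rw [hu₁, hu₂]; ring
      rw [e, hxnum, mul_div_cancel_right₀ _ hd0]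
    have hyu : y.re*u₁ + y.im*u₂ = ‖x‖*Real.cos (ω/2) := by
      have e : y.re*u₁ + y.im*u₂
          = (y.re*(x.re+y.re) + y.im*(x.im+y.im))/(2*‖x‖*Real.cos (ω/2)) := by
        rw [hu₁, hu₂]; ring
      rw [e, hynum, mul_div_cancel_right₀ _ hd0]
    have ha2v : dist x zs^2 = 1 + ‖x‖^2 - 2*‖x‖*Real.cos (ω/2) := by
      rw [dist_eq_norm, hnsq]
      simp only [Complex.sub_re, Complex.sub_im, hzsre, hzsim]
      linear_combination hx2 + hu1 - 2*hxu
    have hb2v : dist zs y^2 = 1 + ‖x‖^2 - 2*‖x‖*Real.cos (ω/2) := by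
      rw [dist_eq_norm, hnsq]
      simp only [Complex.sub_re, Complex.sub_im, hzsre, hzsim]
      linear_combination hy2 + hu1 - 2*hyu
    have hav : dist x zs = Real.sqrt (1 + ‖x‖^2 - 2*‖x‖*Real.cos (ω/2)) :=
      eq_of_sq_eq' dist_nonneg (Real.sqrt_nonneg _) (by rw [ha2v, hsA2])
    have hbv : dist zs y = Real.sqrt (1 + ‖x‖^2 - 2*‖x‖*Real.cos (ω/2)) :=
      eq_of_sq_eq' dist_nonneg (Real.sqrt_nonneg _) (by rw [hb2v, hsA2])
    have hval : dist x y / (dist x zs + dist zs y)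
        = ‖x‖ * Real.sin (ω/2) / Real.sqrt (1 + ‖x‖^2 - 2*‖x‖*Real.cos (ω/2)) := by
      rw [hdxy, hav, hbv, div_eq_div_iff (add_pos hsA hsA).ne' hsA.ne']
      ring
    unfold sMet
    rw [hfr]
    apply csSup_image_eq' hmem hval
    intro z hz
    obtain ⟨hax, hby, ha2, hb2, hPar, hσ, hδ⟩ := hzfacts z hz
    rw [div_le_div_iff₀ (add_pos hax hby) hsA]
    have hkey := key_ineq2 ‖x‖ (Real.cos (ω/2)) (Real.sin (ω/2))
      ((x.re*z.re+x.im*z.im)+(y.re*z.re+y.im*z.im))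
      ((x.re*z.re+x.im*z.im)-(y.re*z.re+y.im*z.im))
      (dist x z) (dist z y) hr0 hr1 hc0 hs0 hcs hax.le hby.le ha2 hb2 hPar hσ hδ h2
    rw [hdxy]
    have hsum : 2*Real.sqrt (1 + ‖x‖^2 - 2*‖x‖*Real.cos (ω/2)) ≤ dist x z + dist z y :=
      two_sqrt_le hA0.le hax.le hby.le hkey
    have hrs : 0 ≤ ‖x‖*Real.sin (ω/2) := mul_nonneg (norm_nonneg x) hs0
    calc 2*(‖x‖*Real.sin (ω/2)) * Real.sqrt (1 + ‖x‖^2 - 2*‖x‖*Real.cos (ω/2))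
        = (‖x‖*Real.sin (ω/2)) * (2*Real.sqrt (1 + ‖x‖^2 - 2*‖x‖*Real.cos (ω/2))) := by ring
      _ ≤ (‖x‖*Real.sin (ω/2)) * (dist x z + dist z y) :=
          mul_le_mul_of_nonneg_left hsum hrs
      _ = ‖x‖*Real.sin (ω/2) * (dist x z + dist z y) := by ring
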